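/- Let 0 < γ < 1 and define the sequence s_j^{(k)} by the recurrence s_j^{(k)} = s_{j-1}^{(k)} + s_j^{(k-1)} with boundary conditions s_0^{(k)} = p_0 (1-γ)^{-k+1} and s_j^{(0)} = (1-p_0) γ^{-j+1}, where p_0 ∈ [0,1]. Then for all j, k ≥ 1, s_j^{(k)} = (1-γ)^{-k} [ (1-p_0) γ^{-j+1} - (γ - p_0) \sum_{k'=0}^{k-1} \binom{j-1+k'}{k'} (1-γ)^{k'} ]. -/

import Mathlib

lemma sum_pascal_aux (x : ℝ) (m : ℕ) : ∀ k : ℕ,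
    ∑ k' ∈ Finset.range (k+1), ((m+1+k').choose k' : ℝ) * x ^ k'
      = ∑ k' ∈ Finset.range (k+1), ((m+k').choose k' : ℝ) * x ^ k'
        + x * ∑ k' ∈ Finset.range k, ((m+1+k').choose k' : ℝ) * x ^ k' := by
  intro k
  induction k with
  | zero => simp
  | succ k ih =>
    rw [Finset.sum_range_succ (f := fun k' => ((m+1+k').choose k' : ℝ) * x ^ k') (n := k),
      Finset.sum_range_succ, ih,
      Finset.sum_range_succ (f := fun k' => ((m+k').choose k' : ℝ) * x ^ k') (n := k+1)]
    have hch : ((m+1+(k+1)).choose (k+1) : ℝ)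
        = ((m+(k+1)).choose (k+1) : ℝ) + ((m+1+k).choose k : ℝ) := by
      have : (m+1+(k+1)).choose (k+1) = (m+1+k).choose k + (m+1+k).choose (k+1) := by
        exact Nat.choose_succ_succ (m+1+k) k
      rw [this]
      have h2 : m + (k+1) = m + 1 + k := by omega
      rw [h2]
      push_cast
      ring
    rw [hch]
    ring

theorem stmt_11 (γ p₀ : ℝ) (hγ : γ ∈ Set.Ioo (0:ℝ) 1) (hp₀ : p₀ ∈ Set.Icc (0:ℝ) 1)
    (s : ℕ → ℕ → ℝ)
    (hrec : ∀ j k, 1 ≤ j → 1 ≤ k → s j k = s (j - 1) k + s j (k - 1))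
    (hb1 : ∀ k, s 0 k = p₀ * ((1 - γ) ^ (k - 1))⁻¹)
    (hb2 : ∀ j, s j 0 = (1 - p₀) * (γ ^ (j - 1))⁻¹) :
    ∀ j k, 1 ≤ j → 1 ≤ k →
      s j k = ((1 - γ) ^ k)⁻¹ *
        ((1 - p₀) * (γ ^ (j - 1))⁻¹ -
          (γ - p₀) * ∑ k' ∈ Finset.range k, ((j - 1 + k').choose k' : ℝ) * (1 - γ) ^ k') := by
  obtain ⟨hγ0, hγ1⟩ := hγ
  have hg : γ ≠ 0 := ne_of_gt hγ0
  have hx : (1:ℝ) - γ ≠ 0 := by intro h; apply absurd hγ1; linarith [sub_eq_zero.mp h]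
  have hgeom : ∀ k : ℕ, ∑ k' ∈ Finset.range k, (1 - γ) ^ k'
      = (1 - (1 - γ) ^ k) / γ := by
    intro k
    induction k with
    | zero => simp
    | succ k ih => rw [Finset.sum_range_succ, ih]; field_simp; ring
  intro j k hj hk
  induction j, hj using Nat.le_induction generalizing k hk with
  | base =>
    -- j = 1
    induction k, hk using Nat.le_induction with
    | base =>
      rw [hrec 1 1 le_rfl le_rfl]
      simp only [Nat.sub_self, hb1, hb2]
      norm_num
      field_simp
    | succ k hk ihk =>
      rw [hrec 1 (k+1) le_rfl (by omega)]
      simp only [Nat.add_sub_cancel, Nat.sub_self, zero_add, Nat.choose_self,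
        Nat.cast_one, one_mul] at ihk ⊢
      rw [ihk, hb1, Nat.add_sub_cancel, hgeom, hgeom]
      field_simp
      ring
  | succ j hj ihj =>
    obtain ⟨m, rfl⟩ : ∃ m, j = m + 1 := ⟨j - 1, by omega⟩
    induction k, hk using Nat.le_induction with
    | base =>
      rw [hrec (m+2) 1 (by omega) le_rfl]
      have h1 : m + 2 - 1 = m + 1 := rfl
      rw [h1, ihj 1 le_rfl, hb2]
      simp only [h1, Nat.add_sub_cancel, Finset.sum_range_one, pow_zero, mul_one,
        Nat.add_zero, Nat.choose_zero_right, Nat.cast_one, pow_one]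
      field_simp
      ring
    | succ k hk ihk =>
      rw [hrec (m+2) (k+1) (by omega) (by omega)]
      have h1 : m + 2 - 1 = m + 1 := rfl
      have h2 : k + 1 - 1 = k := rfl
      rw [h1, h2, ihj (k+1) (by omega), ihk]
      simp only [Nat.add_sub_cancel]
      rw [sum_pascal_aux (1 - γ) m k]
      field_simp
      ring
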